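/- The group Q8 × Z/4 admits a symmetric subset S of size 4 such that the Cayley graph Cay(Q8 × Z/4, S) has irrational eigenvalues ±2√2. -/

import Mathlib

open Classical in
/-- Adjacency matrix of the Cayley graph `Cay(G,S)`: `x ~ y` iff `x * y⁻¹ ∈ S`. -/
noncomputable def cayleyMatrix {G : Type*} [Group G] (S : Set G) : Matrix G G ℝ :=
  fun x y => if x * y⁻¹ ∈ S then 1 else 0

/-- All eigenvalues of the real matrix `A` are integers. -/
noncomputable def isIntegralMatrix {n : Type*} [Finite n] (A : Matrix n n ℝ) : Prop :=
  letI := Fintype.ofFinite n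
  letI := Classical.decEq n
  ∀ μ : ℝ, Module.End.HasEigenvalue (Matrix.toLin' A) μ → ∃ z : ℤ, μ = (z : ℝ)

/-! ### Auxiliary machinery -/

open QuaternionGroup

/-- integer "cosine" table on `ZMod 4` -/
def ccZ (m : ZMod 4) : ℤ := if m = 0 then 1 else if m = 2 then -1 else 0

/-- integer "sine" table on `ZMod 4` -/
def ddZ (m : ZMod 4) : ℤ := if m = 1 then 1 else if m = 3 then -1 else 0

noncomputable def cc (m : ZMod 4) : ℝ := (ccZ m : ℝ)
noncomputable def dd (m : ZMod 4) : ℝ := (ddZ m : ℝ)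

lemma dd_sub_three (m : ZMod 4) : dd (m - 3) = cc m := by
  have : ddZ (m - 3) = ccZ m := by revert m; decide
  simp [dd, cc, this]

lemma dd_add_one (m : ZMod 4) : dd (m + 1) = cc m := by
  have : ddZ (m + 1) = ccZ m := by revert m; decide
  simp [dd, cc, this]

lemma dd_sub_two (m : ZMod 4) : dd (m - 2) = -dd m := by
  have : ddZ (m - 2) = -ddZ m := by revert m; decide
  simp [dd, this]

lemma dd_add_two (m : ZMod 4) : dd (m + 2) = -dd m := by
  have : ddZ (m + 2) = -ddZ m := by revert m; decide
  simp [dd, this]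

lemma cc_sub_one (m : ZMod 4) : cc (m - 1) = dd m := by
  have : ccZ (m - 1) = ddZ m := by revert m; decide
  simp [dd, cc, this]

lemma cc_zero : cc 0 = 1 := by simp [cc, ccZ]

/-- The eigenvector (real part of a matrix coefficient of the representation). -/
noncomputable def vv (t : ℝ) : QuaternionGroup 2 × Multiplicative (ZMod 4) → ℝ
  | (a k, j) => (1 + t) * cc (Multiplicative.toAdd j - k)
  | (xa k, j) => dd (Multiplicative.toAdd j - k)

/-- Generic convolution formula for the Cayley matrix. -/
lemma cayley_mulVec {G : Type*} [Group G] [Fintype G] [DecidableEq G]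
    (S : Finset G) (v : G → ℝ) (x : G) :
    (cayleyMatrix (S : Set G)).mulVec v x = ∑ s ∈ S, v (s⁻¹ * x) := by
  classical
  have h1 : (cayleyMatrix (S : Set G)).mulVec v x
      = ∑ y : G, (if x * y⁻¹ ∈ S then (1 : ℝ) else 0) * v y := by
    simp [cayleyMatrix, Matrix.mulVec, dotProduct]
  have h2 : ∑ y : G, (if x * y⁻¹ ∈ S then (1 : ℝ) else 0) * v y
      = ∑ s : G, (if x * (s⁻¹ * x)⁻¹ ∈ S then (1 : ℝ) else 0) * v (s⁻¹ * x) :=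
    (Equiv.sum_comp ((Equiv.inv G).trans (Equiv.mulRight x))
      (fun y => (if x * y⁻¹ ∈ S then (1 : ℝ) else 0) * v y)).symm
  have h3 : ∀ s : G, x * (s⁻¹ * x)⁻¹ = s := fun s => by group
  rw [h1, h2]
  simp only [h3, ite_mul, one_mul, zero_mul]
  simp [Finset.sum_ite_mem]

abbrev Gp := QuaternionGroup 2 × Multiplicative (ZMod 4)

noncomputable def SS : Finset Gp :=
  { (a 1, Multiplicative.ofAdd (1 : ZMod 4)),
    (a (-1), Multiplicative.ofAdd (-1 : ZMod 4)),
    (xa 0, Multiplicative.ofAdd (1 : ZMod 4)),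
    (xa 2, Multiplicative.ofAdd (-1 : ZMod 4)) }

lemma key (t : ℝ) (ht : t * t = 2) (x : Gp) :
    (cayleyMatrix (SS : Set Gp)).mulVec (vv t) x = (2 * t) * vv t x := by
  rw [cayley_mulVec]
  have hsum : ∑ s ∈ SS, vv t (s⁻¹ * x)
      = vv t ((a 1, Multiplicative.ofAdd (1 : ZMod 4))⁻¹ * x)
      + vv t ((a (-1), Multiplicative.ofAdd (-1 : ZMod 4))⁻¹ * x)
      + vv t ((xa 0, Multiplicative.ofAdd (1 : ZMod 4))⁻¹ * x)
      + vv t ((xa 2, Multiplicative.ofAdd (-1 : ZMod 4))⁻¹ * x) := by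
    rw [show SS = insert (a 1, Multiplicative.ofAdd (1 : ZMod 4))
        (insert (a (-1), Multiplicative.ofAdd (-1 : ZMod 4))
          (insert (xa 0, Multiplicative.ofAdd (1 : ZMod 4))
            {(xa 2, Multiplicative.ofAdd (-1 : ZMod 4))})) from rfl,
      Finset.sum_insert (by decide), Finset.sum_insert (by decide),
      Finset.sum_insert (by decide), Finset.sum_singleton]
    ring
  rw [hsum]
  obtain ⟨q, j⟩ := x
  have hinv_a : ∀ i : ZMod (2 * 2), (a i)⁻¹ = a (-i) := fun _ => rfl
  have hinv_xa : ∀ i : ZMod (2 * 2), (xa i)⁻¹ = xa ((2 : ZMod (2*2)) + i) := fun _ => rfl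
  cases q with
  | a k =>
      simp only [Prod.inv_mk, Prod.mk_mul_mk, hinv_a, hinv_xa, a_mul_a, xa_mul_a, vv,
        toAdd_mul, toAdd_inv, toAdd_ofAdd, neg_neg, Nat.cast_ofNat]
      have e1 : (-(1 : ZMod 4) + Multiplicative.toAdd j) - (-1 + k)
          = Multiplicative.toAdd j - k := by ring
      have e2 : ((1 : ZMod 4) + Multiplicative.toAdd j) - (1 + k)
          = Multiplicative.toAdd j - k := by ring
      have e3 : (-(1 : ZMod 4) + Multiplicative.toAdd j) - (2 + 0 + k)
          = (Multiplicative.toAdd j - k) - 3 := by ring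
      have e4 : ((1 : ZMod 4) + Multiplicative.toAdd j) - (2 + 2 + k)
          = (Multiplicative.toAdd j - k) + 1 := by
        have h22 : ((2 : ZMod 4) + 2) = 0 := by decide
        rw [show ((2 : ZMod 4) + 2 + k) = 0 + k from by rw [h22]]
        ring
      rw [e1, e2, e3, e4, dd_sub_three, dd_add_one]
      set m := cc (Multiplicative.toAdd j - k)
      linear_combination (-2 * m) * ht
  | xa k =>
      simp only [Prod.inv_mk, Prod.mk_mul_mk, hinv_a, hinv_xa, a_mul_xa, xa_mul_xa, vv,
        toAdd_mul, toAdd_inv, toAdd_ofAdd, neg_neg, Nat.cast_ofNat]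
      have e1 : (-(1 : ZMod 4) + Multiplicative.toAdd j) - (k - -1)
          = (Multiplicative.toAdd j - k) - 2 := by ring
      have e2 : ((1 : ZMod 4) + Multiplicative.toAdd j) - (k - 1)
          = (Multiplicative.toAdd j - k) + 2 := by ring
      have e3 : (-(1 : ZMod 4) + Multiplicative.toAdd j) - ((2 : ZMod 4) + k - (2 + 0))
          = (Multiplicative.toAdd j - k) - 1 := by ring
      have e4 : ((1 : ZMod 4) + Multiplicative.toAdd j) - ((2 : ZMod 4) + k - (2 + 2))
          = (Multiplicative.toAdd j - k) - 1 := by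
        have : ((2 : ZMod 4) + 2) = 0 := by decide
        rw [this]; ring
      rw [e1, e2, e3, e4, dd_sub_two, dd_add_two, cc_sub_one]
      ring

lemma vv_ne_zero (t : ℝ) (ht : t ≠ -1) : vv t ≠ 0 := by
  intro h
  have := congrFun h (a 0, Multiplicative.ofAdd (0 : ZMod 4))
  simp only [vv, toAdd_ofAdd, Pi.zero_apply] at this
  rw [show ((0 : ZMod 4) - (0 : ZMod (2*2))) = (0 : ZMod 4) from by decide, cc_zero,
    mul_one] at this
  exact ht (by linarith)

lemma eig (t : ℝ) (ht : t * t = 2) (ht1 : t ≠ -1) :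
    Module.End.HasEigenvalue (Matrix.toLin' (cayleyMatrix (SS : Set Gp))) (2 * t) := by
  apply Module.End.hasEigenvalue_of_hasEigenvector (x := vv t)
  constructor
  · rw [Module.End.mem_eigenspace_iff]
    funext x
    rw [Matrix.toLin'_apply]
    simpa using key t ht x
  · exact vv_ne_zero t ht1

theorem quaternion_times_Z4_irrational_eigenvalue :
    ∃ S : Finset (QuaternionGroup 2 × Multiplicative (ZMod 4)),
      S.card = 4 ∧ (∀ s ∈ S, s⁻¹ ∈ S) ∧
      (1 : QuaternionGroup 2 × Multiplicative (ZMod 4)) ∉ S ∧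
      Irrational (2 * Real.sqrt 2) ∧
      Module.End.HasEigenvalue
        (Matrix.toLin' (cayleyMatrix (S : Set (QuaternionGroup 2 × Multiplicative (ZMod 4)))))
        (2 * Real.sqrt 2) ∧
      Module.End.HasEigenvalue
        (Matrix.toLin' (cayleyMatrix (S : Set (QuaternionGroup 2 × Multiplicative (ZMod 4)))))
        (-(2 * Real.sqrt 2)) := by
  refine ⟨SS, ?_, ?_, ?_, ?_, ?_, ?_⟩
  · decide
  · decide
  · decide
  · simpa using irrational_sqrt_two.natCast_mul (m := 2) (by norm_num)
  · have h2 : Real.sqrt 2 * Real.sqrt 2 = 2 := Real.mul_self_sqrt (by norm_num)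
    have h1 : Real.sqrt 2 ≠ -1 := by
      have := Real.sqrt_nonneg 2; intro h; rw [h] at this; linarith
    exact eig _ h2 h1
  · have h2 : (-Real.sqrt 2) * (-Real.sqrt 2) = 2 := by
      rw [neg_mul_neg]; exact Real.mul_self_sqrt (by norm_num)
    have h1 : -Real.sqrt 2 ≠ -1 := by
      intro h
      have : Real.sqrt 2 = 1 := by linarith
      nlinarith [Real.mul_self_sqrt (show (0:ℝ) ≤ 2 by norm_num)]
    have := eig _ h2 h1
    rwa [show 2 * -Real.sqrt 2 = -(2 * Real.sqrt 2) by ring] at this
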